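/- A point y in ℝ^D is metrically between x and z under the combined metric d_C (i.e., d_C(x,y) + d_C(y,z) = d_C(x,z)) if and only if for every domain δ, the restriction of y to the coordinates of δ lies on the line segment (in the λ-scaled sense, possibly with a different parameter per domain) between the restrictions of x and z; i.e., for each δ there exists t_δ ∈ [0,1] with y_d = (1 − t_δ)x_d + t_δ z_d for all d ∈ δ. -/

import Mathlib

open Finset

/-- The combined distance: weighted Manhattan sum over domains of weighted
Euclidean distances within each domain. -/
noncomputable def combinedDist {ι κ : Type*} [Fintype ι] [DecidableEq κ]
    (doms : Finset κ) (dom : ι → κ) (wδ : κ → ℝ) (wd : ι → ℝ)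
    (x y : ι → ℝ) : ℝ :=
  ∑ δ ∈ doms, wδ δ *
    Real.sqrt (∑ d ∈ Finset.univ.filter (fun d => dom d = δ), wd d * |x d - y d| ^ 2)

noncomputable def wemb {ι : Type*} (S : Finset ι) (wd : ι → ℝ) (x : ι → ℝ) :
    EuclideanSpace ℝ S :=
  WithLp.toLp 2 (fun d : S => Real.sqrt (wd d.1) * x d.1)

lemma sqrt_sum_eq_dist {ι : Type*} (S : Finset ι) (wd : ι → ℝ) (hwd : ∀ d, 0 ≤ wd d)
    (x y : ι → ℝ) :
    Real.sqrt (∑ d ∈ S, wd d * |x d - y d| ^ 2) = dist (wemb S wd x) (wemb S wd y) := by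
  rw [EuclideanSpace.dist_eq]
  congr 1
  rw [← Finset.sum_attach S (fun d => wd d * |x d - y d| ^ 2)]
  refine Finset.sum_congr rfl fun d _ => ?_
  rw [Real.dist_eq, wemb, wemb, PiLp.toLp_apply, PiLp.toLp_apply]
  rw [← mul_sub, abs_mul, mul_pow, sq_abs (Real.sqrt _), Real.sq_sqrt (hwd d.1), sq_abs]

lemma per_domain {ι : Type*} (S : Finset ι) (wd : ι → ℝ) (hwd : ∀ d, 0 < wd d)
    (x y z : ι → ℝ) :
    Real.sqrt (∑ d ∈ S, wd d * |x d - y d| ^ 2)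
      + Real.sqrt (∑ d ∈ S, wd d * |y d - z d| ^ 2)
      = Real.sqrt (∑ d ∈ S, wd d * |x d - z d| ^ 2) ↔
    ∃ t ∈ Set.Icc (0 : ℝ) 1, ∀ d ∈ S, y d = (1 - t) * x d + t * z d := by
  have hwd' : ∀ d, 0 ≤ wd d := fun d => (hwd d).le
  rw [sqrt_sum_eq_dist S wd hwd' x y, sqrt_sum_eq_dist S wd hwd' y z,
    sqrt_sum_eq_dist S wd hwd' x z, dist_add_dist_eq_iff, ← mem_segment_iff_wbtw]
  constructor
  · rintro ⟨a, b, ha, hb, hab, hy⟩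
    refine ⟨b, ⟨hb, by linarith⟩, fun d hd => ?_⟩
    have := congrArg (fun v => v ⟨d, hd⟩) hy
    simp only [wemb, PiLp.add_apply, PiLp.smul_apply, smul_eq_mul, PiLp.toLp_apply] at this
    have hs : (0 : ℝ) < Real.sqrt (wd d) := Real.sqrt_pos.2 (hwd d)
    have ha' : a = 1 - b := by linarith
    subst ha'
    nlinarith [this]
  · rintro ⟨t, ⟨ht0, ht1⟩, hy⟩
    refine ⟨1 - t, t, by linarith, ht0, by ring, ?_⟩
    ext d
    simp only [wemb, PiLp.add_apply, PiLp.smul_apply, smul_eq_mul, PiLp.toLp_apply]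
    rw [hy d.1 d.2]
    ring

/-- `y` is metrically between `x` and `z` under the combined metric `d_C` iff
for every domain `δ` there is a parameter `t_δ ∈ [0,1]` such that on the
coordinates of `δ`, `y` is the corresponding convex combination of `x` and `z`. -/
theorem combined_between_iff_segment_per_domain {ι κ : Type*} [Fintype ι] [Fintype κ]
    [DecidableEq κ] (dom : ι → κ) (wδ : κ → ℝ) (wd : ι → ℝ)
    (hwδ : ∀ δ, 0 < wδ δ) (hwd : ∀ d, 0 < wd d)
    (x y z : ι → ℝ) :
    combinedDist Finset.univ dom wδ wd x y + combinedDist Finset.univ dom wδ wd y z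
        = combinedDist Finset.univ dom wδ wd x z ↔
      ∀ δ : κ, ∃ t ∈ Set.Icc (0 : ℝ) 1,
        ∀ d, dom d = δ → y d = (1 - t) * x d + t * z d := by
  have hwd' : ∀ d, 0 ≤ wd d := fun d => (hwd d).le
  unfold combinedDist
  set S : κ → Finset ι := fun δ => Finset.univ.filter (fun d => dom d = δ) with hS
  have tri : ∀ δ ∈ (Finset.univ : Finset κ),
      wδ δ * Real.sqrt (∑ d ∈ S δ, wd d * |x d - z d| ^ 2)
      ≤ wδ δ * Real.sqrt (∑ d ∈ S δ, wd d * |x d - y d| ^ 2)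
        + wδ δ * Real.sqrt (∑ d ∈ S δ, wd d * |y d - z d| ^ 2) := by
    intro δ _
    rw [← mul_add]
    refine mul_le_mul_of_nonneg_left ?_ (hwδ δ).le
    rw [sqrt_sum_eq_dist _ wd hwd' x y, sqrt_sum_eq_dist _ wd hwd' y z,
      sqrt_sum_eq_dist _ wd hwd' x z]
    exact dist_triangle _ _ _
  have hrhs : (∀ δ : κ, ∃ t ∈ Set.Icc (0 : ℝ) 1,
      ∀ d, dom d = δ → y d = (1 - t) * x d + t * z d)
      ↔ ∀ δ : κ, ∃ t ∈ Set.Icc (0 : ℝ) 1, ∀ d ∈ S δ, y d = (1 - t) * x d + t * z d := by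
    simp [hS]
  rw [← Finset.sum_add_distrib, hrhs]
  constructor
  · intro h δ
    rw [← per_domain (S δ) wd hwd x y z]
    have key := (Finset.sum_eq_sum_iff_of_le tri).1 h.symm δ (Finset.mem_univ δ)
    have h2 : wδ δ * (Real.sqrt (∑ d ∈ S δ, wd d * |x d - y d| ^ 2)
        + Real.sqrt (∑ d ∈ S δ, wd d * |y d - z d| ^ 2))
        = wδ δ * Real.sqrt (∑ d ∈ S δ, wd d * |x d - z d| ^ 2) := by
      rw [mul_add]; linarith
    exact mul_left_cancel₀ (hwδ δ).ne' h2
  · intro h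
    refine Finset.sum_congr rfl fun δ _ => ?_
    rw [← mul_add]
    congr 1
    rw [per_domain (S δ) wd hwd x y z]
    exact h δ
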